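/- arXiv:2408.03529 — 5 statements merged into one kernel-verified Lean document; each statement's English description precedes it below -/
import Mathlib

section
/- Let (U, R, 𝓕) be a CF-approximation space, V ⊆ U and 𝓖 ⊆ 𝓕 ∩ 𝒫(V), and write R|V = R ∩ (V × V). If for every finite K ⊆ U and every F ∈ 𝓕 with K ⊆ R̄(F) there exists G ∈ 𝓖 such that K ⊆ R̄(G) and G ⊆ R̄(F), then (V, R|V, 𝓖) is itself a CF-approximation space (i.e. a CF-approximation subspace of (U, R, 𝓕)). -/
open Set

/-- The upper approximation operator: `upp R A = {x | ∃ y ∈ A, x R y}`. -/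
def upp {U : Type*} (R : U → U → Prop) (A : Set U) : Set U := {x | ∃ y ∈ A, R x y}

/-- `(U, R, 𝓕)` is a CF-approximation space. -/
def IsCFApprox {U : Type*} (R : U → U → Prop) (𝓕 : Set (Set U)) : Prop :=
  Transitive R ∧ 𝓕.Nonempty ∧ (∀ F ∈ 𝓕, F.Finite) ∧
    ∀ F ∈ 𝓕, ∀ K : Set U, K.Finite → K ⊆ upp R F →
      ∃ G ∈ 𝓕, K ⊆ upp R G ∧ G ⊆ upp R F

/-- `E` is a CF-closed set of `(U, R, 𝓕)`. -/
def CFClosed {U : Type*} (R : U → U → Prop) (𝓕 : Set (Set U)) (E : Set U) : Prop :=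
  ∀ K : Set U, K.Finite → K ⊆ E →
    ∃ F ∈ 𝓕, K ⊆ upp R F ∧ upp R F ⊆ E ∧ F ⊆ E

/-- The join saturation `𝓕^♯`: all unions of nonempty finite subfamilies of `𝓕`. -/
def joinSat {U : Type*} (𝓕 : Set (Set U)) : Set (Set U) :=
  {A | ∃ 𝓐 : Set (Set U), 𝓐 ⊆ 𝓕 ∧ 𝓐.Finite ∧ 𝓐.Nonempty ∧ A = ⋃₀ 𝓐}

/-- `S(M, F)`: the set of `G ∈ 𝓕` satisfying (sL-1) and (sL-2). -/
def SFam {U : Type*} (R : U → U → Prop) (𝓕 : Set (Set U)) (M F : Set U) : Set (Set U) :=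
  {G | G ∈ 𝓕 ∧ upp R M ⊆ upp R G ∧ upp R G ⊆ upp R F ∧
    ∀ G' ∈ 𝓕, upp R M ⊆ upp R G' → upp R G' ⊆ upp R F → upp R G ⊆ upp R G'}

/-- `S*(M, F) = {G ∈ S(M, F) | G ⊆ upp R F}`. -/
def SStar {U : Type*} (R : U → U → Prop) (𝓕 : Set (Set U)) (M F : Set U) : Set (Set U) :=
  {G | G ∈ SFam R 𝓕 M F ∧ G ⊆ upp R F}

/-- sL-approximation space. -/
def IsSLApprox {U : Type*} (R : U → U → Prop) (𝓕 : Set (Set U)) : Prop :=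
  IsCFApprox R 𝓕 ∧
    ∀ M ∈ joinSat 𝓕, ∀ F ∈ 𝓕, M ⊆ upp R F → (SFam R 𝓕 M F).Nonempty

/-- L-approximation space. -/
def IsLApprox {U : Type*} (R : U → U → Prop) (𝓕 : Set (Set U)) : Prop :=
  IsCFApprox R 𝓕 ∧
    ∀ M ∈ joinSat 𝓕 ∪ {(∅ : Set U)}, ∀ F ∈ 𝓕, M ⊆ upp R F → (SFam R 𝓕 M F).Nonempty

/-- bc-approximation space. -/
def IsBCApprox {U : Type*} (R : U → U → Prop) (𝓕 : Set (Set U)) : Prop :=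
  IsCFApprox R 𝓕 ∧
    ∀ M ∈ joinSat 𝓕 ∪ {(∅ : Set U)}, ∀ F ∈ 𝓕, M ⊆ upp R F →
      ∃ G ∈ 𝓕, upp R M ⊆ upp R G ∧ upp R G ⊆ upp R F ∧
        ∀ G' ∈ 𝓕, upp R M ⊆ upp R G' → upp R G ⊆ upp R G'

/-- A dcpo: every (nonempty) directed subset has a supremum. -/
def IsDcpo (P : Type*) [PartialOrder P] : Prop :=
  ∀ D : Set P, D.Nonempty → DirectedOn (· ≤ ·) D → ∃ s, IsLUB D s

/-- The way-below relation `x ≪ y`. -/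
def WayBelow {P : Type*} [PartialOrder P] (x y : P) : Prop :=
  ∀ D : Set P, D.Nonempty → DirectedOn (· ≤ ·) D →
    ∀ s, IsLUB D s → y ≤ s → ∃ d ∈ D, x ≤ d

/-- Continuous domain: a dcpo in which for every `x` the set `{z | z ≪ x}` is
directed with supremum `x`. -/
def IsContinuousDomain (P : Type*) [PartialOrder P] : Prop :=
  IsDcpo P ∧ ∀ x : P, {z | WayBelow z x}.Nonempty ∧
    DirectedOn (· ≤ ·) {z | WayBelow z x} ∧ IsLUB {z | WayBelow z x} x

/-- Algebraic domain: a dcpo in which for every `x` the set `↓x ∩ K(P)` is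
directed with supremum `x`. -/
def IsAlgebraicDomain (P : Type*) [PartialOrder P] : Prop :=
  IsDcpo P ∧ ∀ x : P, ({k | k ≤ x ∧ WayBelow k k}).Nonempty ∧
    DirectedOn (· ≤ ·) {k | k ≤ x ∧ WayBelow k k} ∧
    IsLUB {k | k ≤ x ∧ WayBelow k k} x

/-- sL-domain: a continuous domain in which every principal ideal is a
sup-semilattice. -/
def IsSLDomain (P : Type*) [PartialOrder P] : Prop :=
  IsContinuousDomain P ∧ ∀ x a b : P, a ≤ x → b ≤ x →
    ∃ s, s ≤ x ∧ a ≤ s ∧ b ≤ s ∧ ∀ t, t ≤ x → a ≤ t → b ≤ t → s ≤ t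

/-- L-domain: a continuous domain in which every principal ideal is a
complete lattice (every subset of `↓x` has a least upper bound in `↓x`). -/
def IsLDomain (P : Type*) [PartialOrder P] : Prop :=
  IsContinuousDomain P ∧ ∀ (x : P) (A : Set P), (∀ a ∈ A, a ≤ x) →
    ∃ s, s ≤ x ∧ (∀ a ∈ A, a ≤ s) ∧ ∀ t, t ≤ x → (∀ a ∈ A, a ≤ t) → s ≤ t

/-- bc-domain: a continuous domain in which every up-bounded subset has a
supremum. -/
def IsBCDomain (P : Type*) [PartialOrder P] : Prop :=
  IsContinuousDomain P ∧ ∀ A : Set P, (∃ b, ∀ a ∈ A, a ≤ b) → ∃ s, IsLUB A s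

/-- the density condition implies that `(V, R|V, 𝓖)` is itself a
CF-approximation space. -/
theorem stmt0 {U : Type*} (R : U → U → Prop) (𝓕 : Set (Set U))
    (V : Set U) (𝓖 : Set (Set U))
    (hCF : IsCFApprox R 𝓕) (h𝓖𝓕 : 𝓖 ⊆ 𝓕) (h𝓖V : ∀ G ∈ 𝓖, G ⊆ V)
    (hdense : ∀ K : Set U, K.Finite → ∀ F ∈ 𝓕, K ⊆ upp R F →
      ∃ G ∈ 𝓖, K ⊆ upp R G ∧ G ⊆ upp R F) :
    IsCFApprox (fun a b : V => R a.1 b.1)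
      {G' : Set V | Subtype.val '' G' ∈ 𝓖} := by
  obtain ⟨htrans, ⟨F₀, hF₀⟩, hfin, hmain⟩ := hCF
  refine ⟨fun a b c hab hbc => htrans hab hbc, ?_, ?_, ?_⟩
  · obtain ⟨G, hG, -, hGu⟩ := hdense ∅ finite_empty F₀ hF₀ (empty_subset _)
    refine ⟨{x : V | x.1 ∈ G}, ?_⟩
    have : Subtype.val '' {x : V | x.1 ∈ G} = G := by
      ext u; constructor
      · rintro ⟨x, hx, rfl⟩; exact hx
      · intro hu; exact ⟨⟨u, h𝓖V G hG hu⟩, hu, rfl⟩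
    simpa [this] using hG
  · intro F' hF'
    have : (Subtype.val '' F').Finite := hfin _ (h𝓖𝓕 hF')
    exact (this.of_finite_image (Subtype.val_injective.injOn))
  · intro F' hF' K' hK' hK'sub
    have hKsub : Subtype.val '' K' ⊆ upp R (Subtype.val '' F') := by
      rintro u ⟨x, hx, rfl⟩
      obtain ⟨y, hy, hxy⟩ := hK'sub hx
      exact ⟨y.1, ⟨y, hy, rfl⟩, hxy⟩
    obtain ⟨G, hG, hKG, hGF⟩ := hdense (Subtype.val '' K') (hK'.image _)
      (Subtype.val '' F') (h𝓖𝓕 hF') hKsub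
    refine ⟨{x : V | x.1 ∈ G}, ?_, ?_, ?_⟩
    · have : Subtype.val '' {x : V | x.1 ∈ G} = G := by
        ext u; constructor
        · rintro ⟨x, hx, rfl⟩; exact hx
        · intro hu; exact ⟨⟨u, h𝓖V G hG hu⟩, hu, rfl⟩
      simpa [this] using hG
    · intro x hx
      obtain ⟨y, hy, hxy⟩ := hKG ⟨x, hx, rfl⟩
      exact ⟨⟨y, h𝓖V G hG hy⟩, hy, hxy⟩
    · intro x hx
      obtain ⟨y, hy, hxy⟩ := hGF hx
      obtain ⟨y', hy', rfl⟩ := hy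
      exact ⟨y', hy', hxy⟩
end

section
/- Let (U, R, 𝓕) be a CF-approximation space, E ∈ 𝔠(U, R, 𝓕), 𝓕_E = {F ∈ 𝓕 : F ⊆ E} and R|E = R ∩ (E × E). Then (E, R|E, 𝓕_E) is a CF-approximation space, and 𝔠(E, R|E, 𝓕_E) = {H ∈ 𝔠(U, R, 𝓕) : H ⊆ E}, i.e. it equals the principal ideal ↓E of (𝔠(U, R, 𝓕), ⊆). -/
open Set

lemma upp_upp {U : Type*} {R : U → U → Prop} (hR : Transitive R) (F : Set U) :
    upp R (upp R F) ⊆ upp R F := by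
  rintro x ⟨y, ⟨z, hz, hyz⟩, hxy⟩
  exact ⟨z, hz, hR hxy hyz⟩

lemma upp_mono {U : Type*} (R : U → U → Prop) {A B : Set U} (h : A ⊆ B) :
    upp R A ⊆ upp R B := by
  rintro x ⟨y, hy, hxy⟩; exact ⟨y, h hy, hxy⟩

/-- For a CF-closed `E`, any `F ∈ 𝓕` with `F ⊆ E` has `upp R F ⊆ E`. -/
lemma uppE {U : Type*} {R : U → U → Prop} {𝓕 : Set (Set U)}
    (hCF : IsCFApprox R 𝓕) {E : Set U} (hE : CFClosed R 𝓕 E)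
    {F : Set U} (hF : F ∈ 𝓕) (hFE : F ⊆ E) : upp R F ⊆ E := by
  obtain ⟨F₁, hF₁, hFup, hupE, _⟩ := hE F (hCF.2.2.1 F hF) hFE
  exact fun x hx => hupE (upp_upp hCF.1 F₁ (upp_mono R hFup hx))

lemma upp_restrict {U : Type*} (R : U → U → Prop) (E : Set U) (A' : Set E) :
    upp (fun a b : E => R a.1 b.1) A'
      = Subtype.val ⁻¹' (upp R (Subtype.val '' A')) := by
  ext x
  constructor
  · rintro ⟨y, hy, hxy⟩; exact ⟨y.1, ⟨y, hy, rfl⟩, hxy⟩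
  · rintro ⟨y, ⟨y', hy', rfl⟩, hxy⟩; exact ⟨y', hy', hxy⟩

/-- for a CF-closed set `E`, the induced principal subspace
`(E, R|E, 𝓕_E)` is a CF-approximation space whose CF-closed sets are exactly
the CF-closed sets of `(U, R, 𝓕)` contained in `E`. -/
theorem stmt3 {U : Type*} (R : U → U → Prop) (𝓕 : Set (Set U))
    (hCF : IsCFApprox R 𝓕) (E : Set U) (hE : CFClosed R 𝓕 E) :
    IsCFApprox (fun a b : E => R a.1 b.1)
      {F' : Set E | Subtype.val '' F' ∈ 𝓕} ∧
    {H' : Set E | CFClosed (fun a b : E => R a.1 b.1)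
        {F' : Set E | Subtype.val '' F' ∈ 𝓕} H'}
      = (fun H : Set U => (Subtype.val ⁻¹' H : Set E)) ''
          {H | CFClosed R 𝓕 H ∧ H ⊆ E} := by
  obtain ⟨hR, h𝓕ne, hfin, hax⟩ := hCF
  have hCF' : IsCFApprox R 𝓕 := ⟨hR, h𝓕ne, hfin, hax⟩
  set R' : E → E → Prop := fun a b : E => R a.1 b.1 with hR'def
  set 𝓕' : Set (Set E) := {F' : Set E | Subtype.val '' F' ∈ 𝓕} with h𝓕'def
  have hinj : Function.Injective (Subtype.val : E → U) := Subtype.val_injective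
  constructor
  · refine ⟨fun a b c hab hbc => hR hab hbc, ?_, ?_, ?_⟩
    · obtain ⟨F, hF, _, _, hFE⟩ := hE ∅ Set.finite_empty (Set.empty_subset E)
      refine ⟨Subtype.val ⁻¹' F, ?_⟩
      show Subtype.val '' (Subtype.val ⁻¹' F) ∈ 𝓕
      simpa [Set.image_preimage_eq_inter_range, Subtype.range_val,
        Set.inter_eq_self_of_subset_left hFE] using hF
    · intro F' hF'
      exact Set.Finite.of_finite_image (hfin _ hF') hinj.injOn
    · intro F' hF' K' hK'fin hK'
      have hFE : Subtype.val '' F' ⊆ E := by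
        rintro _ ⟨x, _, rfl⟩; exact x.2
      have hKup : Subtype.val '' K' ⊆ upp R (Subtype.val '' F') := by
        rintro _ ⟨x, hx, rfl⟩
        have := hK' hx
        rw [upp_restrict] at this
        exact this
      obtain ⟨G, hG, hKG, hGF⟩ := hax _ hF' (Subtype.val '' K')
        (hK'fin.image _) hKup
      have hGE : G ⊆ E :=
        hGF.trans (uppE hCF' hE hF' hFE)
      refine ⟨Subtype.val ⁻¹' G, ?_, ?_, ?_⟩
      · show Subtype.val '' (Subtype.val ⁻¹' G) ∈ 𝓕
        simpa [Set.image_preimage_eq_inter_range, Subtype.range_val,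
          Set.inter_eq_self_of_subset_left hGE] using hG
      · intro x hx
        rw [upp_restrict]
        have : (x : U) ∈ upp R G := hKG ⟨x, hx, rfl⟩
        simpa [Set.image_preimage_eq_inter_range, Subtype.range_val,
          Set.inter_eq_self_of_subset_left hGE] using this
      · intro x hx
        rw [upp_restrict]
        exact hGF hx
  · ext H'
    simp only [Set.mem_setOf_eq, Set.mem_image]
    constructor
    · intro hH'
      refine ⟨Subtype.val '' H', ⟨?_, by rintro _ ⟨x, _, rfl⟩; exact x.2⟩,
        hinj.preimage_image H'⟩
      intro K hKfin hKH
      have hKE : K ⊆ E := hKH.trans (by rintro _ ⟨x, _, rfl⟩; exact x.2)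
      set K' : Set E := Subtype.val ⁻¹' K with hK'def
      have hK'fin : K'.Finite := hKfin.preimage hinj.injOn
      have hK'H' : K' ⊆ H' := by
        intro x hx
        obtain ⟨y, hy, hyx⟩ := hKH hx
        rwa [← hinj hyx]
      obtain ⟨F', hF', hKF', hupH', hF'H'⟩ := hH' K' hK'fin hK'H'
      have hFE : Subtype.val '' F' ⊆ E := by rintro _ ⟨x, _, rfl⟩; exact x.2
      have huppFE : upp R (Subtype.val '' F') ⊆ E := uppE hCF' hE hF' hFE
      refine ⟨Subtype.val '' F', hF', ?_, ?_, ?_⟩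
      · intro k hk
        have hk' : (⟨k, hKE hk⟩ : E) ∈ K' := hk
        have := hKF' hk'
        rw [upp_restrict] at this
        exact this
      · intro z hz
        have hz' : (⟨z, huppFE hz⟩ : E) ∈ upp R' F' := by
          rw [upp_restrict]; exact hz
        exact ⟨⟨z, huppFE hz⟩, hupH' hz', rfl⟩
      · exact Set.image_mono hF'H'
    · rintro ⟨H, ⟨hH, hHE⟩, rfl⟩
      intro K' hK'fin hK'
      have hKH : Subtype.val '' K' ⊆ H := by
        rintro _ ⟨x, hx, rfl⟩; exact hK' hx
      obtain ⟨F, hF, hKF, hupH, hFH⟩ := hH (Subtype.val '' K')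
        (hK'fin.image _) hKH
      have hFE : F ⊆ E := hFH.trans hHE
      refine ⟨Subtype.val ⁻¹' F, ?_, ?_, ?_, ?_⟩
      · show Subtype.val '' (Subtype.val ⁻¹' F) ∈ 𝓕
        simpa [Set.image_preimage_eq_inter_range, Subtype.range_val,
          Set.inter_eq_self_of_subset_left hFE] using hF
      · intro x hx
        rw [upp_restrict]
        have : (x : U) ∈ upp R F := hKF ⟨x, hx, rfl⟩
        simpa [Set.image_preimage_eq_inter_range, Subtype.range_val,
          Set.inter_eq_self_of_subset_left hFE] using this
      · intro x hx
        rw [upp_restrict] at hx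
        have : (x : U) ∈ upp R F := by
          simpa [Set.image_preimage_eq_inter_range, Subtype.range_val,
            Set.inter_eq_self_of_subset_left hFE] using hx
        exact hupH this
      · intro x hx
        exact hFH hx
end

section
/- Let (U, R, 𝓕) be a CF-approximation space and E ∈ 𝔠(U, R, 𝓕). If S*(K, F) ≠ ∅ for every K ∈ 𝓕^♯ and every F ∈ 𝓕 with R̄(K) ⊆ R̄(F), then ({H ∈ 𝔠(U, R, 𝓕) : H ⊆ E}, ⊆) is a sup-semilattice, i.e. any two CF-closed subsets of E have a least upper bound among the CF-closed subsets of E. -/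
open Set

section Aux

variable {U : Type*} (R : U → U → Prop) (𝓕 : Set (Set U))

/-- A "valid" generator: `M = F_A ∪ F_B` with `F_A, F_B ∈ 𝓕` sitting inside `A`, `B`. -/
def ValidM (A B M : Set U) : Prop :=
  ∃ FA FB, FA ∈ 𝓕 ∧ FA ⊆ A ∧ upp R FA ⊆ A ∧ FB ∈ 𝓕 ∧ FB ⊆ B ∧ upp R FB ⊆ B ∧ M = FA ∪ FB

/-- An "index" for `M` inside `E`. -/
def IdxF (E M F : Set U) : Prop :=
  F ∈ 𝓕 ∧ F ⊆ E ∧ upp R F ⊆ E ∧ M ⊆ upp R F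

/-- Candidate supremum of `A` and `B` inside `E`. -/
def HSup (E A B : Set U) : Set U :=
  {x | ∃ M F G, ValidM R 𝓕 A B M ∧ IdxF R 𝓕 E M F ∧ G ∈ SStar R 𝓕 M F ∧ x ∈ upp R G}

end Aux

/-- if `S*(K, F) ≠ ∅` for all `K ∈ 𝓕^♯` and `F ∈ 𝓕` with
`upp R K ⊆ upp R F`, then the CF-closed subsets of a CF-closed set `E` form a
sup-semilattice under inclusion. -/
theorem stmt7 {U : Type*} (R : U → U → Prop) (𝓕 : Set (Set U))
    (hCF : IsCFApprox R 𝓕) (E : Set U) (hE : CFClosed R 𝓕 E)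
    (hS : ∀ K ∈ joinSat 𝓕, ∀ F ∈ 𝓕, upp R K ⊆ upp R F →
      (SStar R 𝓕 K F).Nonempty) :
    ∀ H₁ H₂ : Set U, CFClosed R 𝓕 H₁ → H₁ ⊆ E → CFClosed R 𝓕 H₂ → H₂ ⊆ E →
      ∃ H : Set U, CFClosed R 𝓕 H ∧ H ⊆ E ∧ H₁ ⊆ H ∧ H₂ ⊆ H ∧
        ∀ H' : Set U, CFClosed R 𝓕 H' → H' ⊆ E → H₁ ⊆ H' → H₂ ⊆ H' → H ⊆ H' := by
  obtain ⟨hTrans, h𝓕ne, hFin, hAxiom⟩ := hCF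
  intro A B hA hAE hB hBE
  -- basic monotonicity / transitivity facts about `upp`
  have upp_mono : ∀ {X Y : Set U}, X ⊆ Y → upp R X ⊆ upp R Y := by
    rintro X Y hXY x ⟨y, hy, hr⟩; exact ⟨y, hXY hy, hr⟩
  have upp_trans : ∀ {X Y : Set U}, X ⊆ upp R Y → upp R X ⊆ upp R Y := by
    rintro X Y hXY x ⟨y, hy, hr⟩
    obtain ⟨z, hz, hr2⟩ := hXY hy
    exact ⟨z, hz, hTrans hr hr2⟩
  -- membership in joinSat for unions of two members of 𝓕
  have mkJS : ∀ FA FB : Set U, FA ∈ 𝓕 → FB ∈ 𝓕 → FA ∪ FB ∈ joinSat 𝓕 := by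
    intro FA FB h1 h2
    refine ⟨{FA, FB}, ?_, (Set.finite_singleton FB).insert FA, ⟨FA, mem_insert _ _⟩, ?_⟩
    · intro X hX; rcases hX with rfl | rfl; exacts [h1, h2]
    · simp [Set.sUnion_pair]
  -- key uniqueness lemma: `upp R G` does not depend on the chosen index
  have mono : ∀ M ∈ joinSat 𝓕, ∀ F F' G G' : Set U, upp R F ⊆ upp R F' →
      G ∈ SFam R 𝓕 M F → G' ∈ SFam R 𝓕 M F' → upp R G = upp R G' := by
    intro M hM F F' G G' hFF' hG hG'
    obtain ⟨hG𝓕, hMG, hGF, hGmin⟩ := hG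
    obtain ⟨hG'𝓕, hMG', hG'F', hG'min⟩ := hG'
    have h1 : upp R G' ⊆ upp R G := hG'min G hG𝓕 hMG (hGF.trans hFF')
    have h2 : upp R G ⊆ upp R G' := hGmin G' hG'𝓕 hMG' (h1.trans hGF)
    exact Subset.antisymm h2 h1
  have key : ∀ M ∈ joinSat 𝓕, ∀ F₁ F₂ G₁ G₂ : Set U, IdxF R 𝓕 E M F₁ → IdxF R 𝓕 E M F₂ →
      G₁ ∈ SFam R 𝓕 M F₁ → G₂ ∈ SFam R 𝓕 M F₂ → upp R G₁ = upp R G₂ := by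
    intro M hM F₁ F₂ G₁ G₂ hI1 hI2 hG1 hG2
    obtain ⟨hF₁𝓕, hF₁E, _, hMF₁⟩ := hI1
    obtain ⟨hF₂𝓕, hF₂E, _, hMF₂⟩ := hI2
    obtain ⟨F₃, hF₃𝓕, hsub, huppE, hF₃E⟩ :=
      hE (F₁ ∪ F₂) ((hFin F₁ hF₁𝓕).union (hFin F₂ hF₂𝓕)) (union_subset hF₁E hF₂E)
    have h13 : upp R F₁ ⊆ upp R F₃ := upp_trans ((subset_union_left).trans hsub)
    have h23 : upp R F₂ ⊆ upp R F₃ := upp_trans ((subset_union_right).trans hsub)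
    obtain ⟨G₃, hG₃⟩ := hS M hM F₃ hF₃𝓕 ((upp_trans hMF₁).trans h13)
    rw [mono M hM F₁ F₃ G₁ G₃ h13 hG1 hG₃.1, mono M hM F₂ F₃ G₂ G₃ h23 hG2 hG₃.1]
  -- the candidate supremum
  refine ⟨HSup R 𝓕 E A B, ?_, ?_, ?_, ?_, ?_⟩
  · -- CF-closedness of HSup
    intro K hKfin hKsub
    have hKc : ∀ x : K, ∃ FA FB F G : Set U, FA ∈ 𝓕 ∧ FA ⊆ A ∧ upp R FA ⊆ A ∧
        FB ∈ 𝓕 ∧ FB ⊆ B ∧ upp R FB ⊆ B ∧ IdxF R 𝓕 E (FA ∪ FB) F ∧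
        G ∈ SStar R 𝓕 (FA ∪ FB) F ∧ (x : U) ∈ upp R G := by
      intro x
      obtain ⟨M, F, G, ⟨FA, FB, h1, h2, h3, h4, h5, h6, rfl⟩, hIdx, hG, hxG⟩ := hKsub x.2
      exact ⟨FA, FB, F, G, h1, h2, h3, h4, h5, h6, hIdx, hG, hxG⟩
    choose FA FB Fx Gx hFA𝓕 hFAA hFAuA hFB𝓕 hFBB hFBuB hIdxx hGx hxGx using hKc
    haveI : Finite K := hKfin.to_subtype
    obtain ⟨FAs, hFAs𝓕, hSAsub, hFAsA, hFAsA'⟩ :=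
      hA (⋃ x : K, FA x) (Set.finite_iUnion fun x => hFin _ (hFA𝓕 x))
        (iUnion_subset fun x => hFAA x)
    obtain ⟨FBs, hFBs𝓕, hSBsub, hFBsB, hFBsB'⟩ :=
      hB (⋃ x : K, FB x) (Set.finite_iUnion fun x => hFin _ (hFB𝓕 x))
        (iUnion_subset fun x => hFBB x)
    set M' : Set U := FAs ∪ FBs with hM'def
    have hM'valid : ValidM R 𝓕 A B M' :=
      ⟨FAs, FBs, hFAs𝓕, hFAsA', hFAsA, hFBs𝓕, hFBsB', hFBsB, rfl⟩
    have hM'JS : M' ∈ joinSat 𝓕 := mkJS _ _ hFAs𝓕 hFBs𝓕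
    obtain ⟨F', hF'𝓕, hM'F', hF'E, hF'E'⟩ :=
      hE M' ((hFin _ hFAs𝓕).union (hFin _ hFBs𝓕))
        (union_subset (hFAsA'.trans hAE) (hFBsB'.trans hBE))
    have hIdx' : IdxF R 𝓕 E M' F' := ⟨hF'𝓕, hF'E', hF'E, hM'F'⟩
    obtain ⟨G', hG'⟩ := hS M' hM'JS F' hF'𝓕 (upp_trans hM'F')
    -- K ⊆ upp R G'
    have hKG' : K ⊆ upp R G' := by
      intro x hx
      set x' : K := ⟨x, hx⟩
      have hMx_sub : FA x' ∪ FB x' ⊆ upp R M' := by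
        refine union_subset ?_ ?_
        · exact (subset_iUnion (fun y : K => FA y) x').trans
            (hSAsub.trans (upp_mono subset_union_left))
        · exact (subset_iUnion (fun y : K => FB y) x').trans
            (hSBsub.trans (upp_mono subset_union_right))
      have hMxJS : FA x' ∪ FB x' ∈ joinSat 𝓕 := mkJS _ _ (hFA𝓕 x') (hFB𝓕 x')
      have hIdxF' : IdxF R 𝓕 E (FA x' ∪ FB x') F' :=
        ⟨hF'𝓕, hF'E', hF'E, hMx_sub.trans (upp_trans hM'F')⟩
      obtain ⟨G'', hG''⟩ := hS (FA x' ∪ FB x') hMxJS F' hF'𝓕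
        ((upp_trans hMx_sub).trans (upp_trans hM'F'))
      have heq : upp R (Gx x') = upp R G'' :=
        key _ hMxJS (Fx x') F' _ _ (hIdxx x') hIdxF' (hGx x').1 hG''.1
      have hsub : upp R G'' ⊆ upp R G' :=
        hG''.1.2.2.2 G' hG'.1.1 ((upp_trans hMx_sub).trans hG'.1.2.1) hG'.1.2.2.1
      have := hxGx x'
      rw [heq] at this
      exact hsub this
    obtain ⟨G₃, hG₃𝓕, hKG₃, hG₃G'⟩ := hAxiom G' hG'.1.1 K hKfin hKG'
    have huppG'H : upp R G' ⊆ HSup R 𝓕 E A B := fun y hy =>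
      ⟨M', F', G', hM'valid, hIdx', hG', hy⟩
    exact ⟨G₃, hG₃𝓕, hKG₃, (upp_trans hG₃G').trans huppG'H, hG₃G'.trans huppG'H⟩
  · -- HSup ⊆ E
    rintro x ⟨M, F, G, _, hIdx, hG, hx⟩
    exact hIdx.2.2.1 (hG.1.2.2.1 hx)
  · -- A ⊆ HSup
    intro a ha
    obtain ⟨Fa, hFa𝓕, haFa, hFaA, hFaA'⟩ :=
      hA {a} (finite_singleton a) (singleton_subset_iff.2 ha)
    obtain ⟨Fb, hFb𝓕, _, hFbB, hFbB'⟩ := hB ∅ finite_empty (empty_subset B)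
    obtain ⟨F, hF𝓕, hMF, hFE, hFE'⟩ :=
      hE (Fa ∪ Fb) ((hFin _ hFa𝓕).union (hFin _ hFb𝓕))
        (union_subset (hFaA'.trans hAE) (hFbB'.trans hBE))
    obtain ⟨G, hG⟩ := hS (Fa ∪ Fb) (mkJS _ _ hFa𝓕 hFb𝓕) F hF𝓕 (upp_trans hMF)
    refine ⟨Fa ∪ Fb, F, G, ⟨Fa, Fb, hFa𝓕, hFaA', hFaA, hFb𝓕, hFbB', hFbB, rfl⟩,
      ⟨hF𝓕, hFE', hFE, hMF⟩, hG, ?_⟩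
    exact hG.1.2.1 (upp_mono subset_union_left (haFa (mem_singleton a)))
  · -- B ⊆ HSup
    intro b hb
    obtain ⟨Fb, hFb𝓕, hbFb, hFbB, hFbB'⟩ :=
      hB {b} (finite_singleton b) (singleton_subset_iff.2 hb)
    obtain ⟨Fa, hFa𝓕, _, hFaA, hFaA'⟩ := hA ∅ finite_empty (empty_subset A)
    obtain ⟨F, hF𝓕, hMF, hFE, hFE'⟩ :=
      hE (Fa ∪ Fb) ((hFin _ hFa𝓕).union (hFin _ hFb𝓕))
        (union_subset (hFaA'.trans hAE) (hFbB'.trans hBE))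
    obtain ⟨G, hG⟩ := hS (Fa ∪ Fb) (mkJS _ _ hFa𝓕 hFb𝓕) F hF𝓕 (upp_trans hMF)
    refine ⟨Fa ∪ Fb, F, G, ⟨Fa, Fb, hFa𝓕, hFaA', hFaA, hFb𝓕, hFbB', hFbB, rfl⟩,
      ⟨hF𝓕, hFE', hFE, hMF⟩, hG, ?_⟩
    exact hG.1.2.1 (upp_mono subset_union_right (hbFb (mem_singleton b)))
  · -- minimality
    rintro H' hH' hH'E hAH' hBH' x ⟨M, F, G, ⟨Fa, Fb, hFa𝓕, hFaA, _, hFb𝓕, hFbB, _, rfl⟩,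
      hIdx, hG, hxG⟩
    obtain ⟨F', hF'𝓕, hMF', hF'H', hF'H''⟩ :=
      hH' (Fa ∪ Fb) ((hFin _ hFa𝓕).union (hFin _ hFb𝓕))
        (union_subset (hFaA.trans hAH') (hFbB.trans hBH'))
    have hIdx' : IdxF R 𝓕 E (Fa ∪ Fb) F' :=
      ⟨hF'𝓕, hF'H''.trans hH'E, hF'H'.trans hH'E, hMF'⟩
    obtain ⟨G', hG'⟩ := hS (Fa ∪ Fb) (mkJS _ _ hFa𝓕 hFb𝓕) F' hF'𝓕 (upp_trans hMF')
    have heq : upp R G = upp R G' :=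
      key _ (mkJS _ _ hFa𝓕 hFb𝓕) F F' G G' hIdx hIdx' hG.1 hG'.1
    rw [heq] at hxG
    exact hF'H' (hG'.1.2.2.1 hxG)
end

section
/- Let (U, R, 𝓕) be an sL-approximation space, E ∈ 𝔠(U, R, 𝓕), F₁, F₂ ∈ 𝓕 with F₁ ∪ F₂ ⊆ E, and M ∈ 𝓕^♯ with M ⊆ R̄(F₁) ∩ R̄(F₂). Then S(M, F₁) = S(M, F₂). -/
open Set

private lemma upp_trans {U : Type*} {R : U → U → Prop} (hT : Transitive R)
    {A B : Set U} (h : A ⊆ upp R B) : upp R A ⊆ upp R B := by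
  rintro x ⟨y, hyA, hxy⟩
  obtain ⟨z, hzB, hyz⟩ := h hyA
  exact ⟨z, hzB, hT hxy hyz⟩

/-- in an sL-approximation space, if `F₁ ∪ F₂ ⊆ E` for a CF-closed
set `E` and `M ∈ 𝓕^♯` with `M ⊆ upp R F₁ ∩ upp R F₂`, then
`S(M, F₁) = S(M, F₂)`. -/
theorem stmt9 {U : Type*} (R : U → U → Prop) (𝓕 : Set (Set U))
    (hSL : IsSLApprox R 𝓕) (E : Set U) (hE : CFClosed R 𝓕 E)
    (F₁ F₂ : Set U) (hF₁ : F₁ ∈ 𝓕) (hF₂ : F₂ ∈ 𝓕) (hFE : F₁ ∪ F₂ ⊆ E)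
    (M : Set U) (hM : M ∈ joinSat 𝓕) (hMF : M ⊆ upp R F₁ ∩ upp R F₂) :
    SFam R 𝓕 M F₁ = SFam R 𝓕 M F₂ := by
  obtain ⟨⟨hT, _, hFin, hCF⟩, hS⟩ := hSL
  have hMfin : M.Finite := by
    obtain ⟨𝓐, h1, h2, _, rfl⟩ := hM
    exact Set.Finite.sUnion h2 (fun A hA => hFin A (h1 hA))
  have key : ∀ Fa Fb : Set U, Fa ∈ 𝓕 → Fb ∈ 𝓕 → Fa ∪ Fb ⊆ E →
      M ⊆ upp R Fa → M ⊆ upp R Fb → SFam R 𝓕 M Fa ⊆ SFam R 𝓕 M Fb := by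
    intro Fa Fb hFa hFb hab hMa hMb
    obtain ⟨F, hF, hsub, hFE', _⟩ :=
      hE (Fa ∪ Fb) ((hFin Fa hFa).union (hFin Fb hFb)) hab
    have hFaF : upp R Fa ⊆ upp R F :=
      upp_trans hT (fun x hx => hsub (Or.inl hx))
    have hFbF : upp R Fb ⊆ upp R F :=
      upp_trans hT (fun x hx => hsub (Or.inr hx))
    obtain ⟨G₀, hG₀F, hMG₀, hG₀le, hG₀min⟩ := hS M hM F hF (hMa.trans hFaF)
    -- every member of S(M, Fc) has the same upper approximation as G₀
    have eqG : ∀ Fc : Set U, Fc ∈ 𝓕 → upp R Fc ⊆ upp R F → M ⊆ upp R Fc →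
        ∀ G ∈ SFam R 𝓕 M Fc, upp R G = upp R G₀ := by
      intro Fc hFc hFcF hMFc G hG
      obtain ⟨hGF, hMG, hGle, hGmin⟩ := hG
      obtain ⟨H, hH, hMH, hHFc⟩ := hCF Fc hFc M hMfin hMFc
      have hHle : upp R H ⊆ upp R Fc := upp_trans hT hHFc
      have hMHu : upp R M ⊆ upp R H := upp_trans hT hMH
      obtain ⟨GH, hGHF, hMGH, hGHle, hGHmin⟩ := hS M hM H hH hMH
      have h1 : upp R G₀ ⊆ upp R H := hG₀min H hH hMHu (hHle.trans hFcF)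
      have h2 : upp R GH ⊆ upp R G₀ := hGHmin G₀ hG₀F hMG₀ h1
      have h3 : upp R G ⊆ upp R GH := hGmin GH hGHF hMGH (hGHle.trans hHle)
      have h4 : upp R G₀ ⊆ upp R G := hG₀min G hGF hMG (hGle.trans hFcF)
      exact Set.Subset.antisymm (h3.trans h2) h4
    intro G hG
    obtain ⟨Gb, hGbmem⟩ := hS M hM Fb hFb hMb
    have hGbF := hGbmem.1
    have hG0 : upp R G = upp R G₀ := eqG Fa hFa hFaF hMa G hG
    have hGb0 : upp R Gb = upp R G₀ := eqG Fb hFb hFbF hMb Gb hGbmem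
    refine ⟨hG.1, hG.2.1, ?_, ?_⟩
    · rw [hG0, ← hGb0]; exact hGbmem.2.2.1
    · intro G' hG' hMG' hG'le
      rw [hG0, ← hGb0]
      exact hGbmem.2.2.2 G' hG' hMG' hG'le
  exact Set.Subset.antisymm
    (key F₁ F₂ hF₁ hF₂ hFE (fun x hx => (hMF hx).1) (fun x hx => (hMF hx).2))
    (key F₂ F₁ hF₂ hF₁ (Set.union_comm F₁ F₂ ▸ hFE)
      (fun x hx => (hMF hx).2) (fun x hx => (hMF hx).1))
end

section
/- Let (U, R, 𝓕) be a topological sL-approximation space and let (V, R|V, 𝓖) be a dense CF-approximation subspace of (U, R, 𝓕). Then (V, R|V, 𝓖) is an sL-approximation space. -/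
open Set

/-- a dense CF-approximation subspace of a topological
sL-approximation space is an sL-approximation space. -/
theorem stmt11 {U : Type*} (R : U → U → Prop) (𝓕 : Set (Set U))
    (V : Set U) (𝓖 : Set (Set U))
    (hSL : IsSLApprox R 𝓕) (hrefl : Reflexive R)
    (h𝓖𝓕 : 𝓖 ⊆ 𝓕) (h𝓖V : ∀ G ∈ 𝓖, G ⊆ V)
    (hdense : ∀ K : Set U, K.Finite → ∀ F ∈ 𝓕, K ⊆ upp R F →
      ∃ G ∈ 𝓖, K ⊆ upp R G ∧ G ⊆ upp R F) :
    IsSLApprox (fun a b : V => R a.1 b.1)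
      {G' : Set V | Subtype.val '' G' ∈ 𝓖} := by
  obtain ⟨⟨htrans, ⟨F0, hF0⟩, hfin, _hCF⟩, hsl⟩ := hSL
  have upp_mono : ∀ A B : Set U, A ⊆ upp R B → upp R A ⊆ upp R B := by
    intro A B h x hx
    obtain ⟨y, hy, hxy⟩ := hx
    obtain ⟨z, hz, hyz⟩ := h hy
    exact ⟨z, hz, htrans hxy hyz⟩
  have self_sub : ∀ A : Set U, A ⊆ upp R A := fun A x hx => ⟨x, hx, hrefl x⟩
  have huppV : ∀ A' : Set V, ∀ x : V,
      (x ∈ upp (fun a b : V => R a.1 b.1) A' ↔ x.1 ∈ upp R (Subtype.val '' A')) := by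
    intro A' x
    constructor
    · rintro ⟨y, hy, hxy⟩; exact ⟨y.1, ⟨y, hy, rfl⟩, hxy⟩
    · rintro ⟨y, ⟨y', hy', rfl⟩, hxy⟩; exact ⟨y', hy', hxy⟩
  have himg : ∀ G ∈ 𝓖, Subtype.val '' (Subtype.val ⁻¹' G : Set V) = G := by
    intro G hG
    rw [Set.image_preimage_eq_inter_range, Subtype.range_coe]
    exact Set.inter_eq_left.mpr (h𝓖V G hG)
  constructor
  · refine ⟨fun a b c hab hbc => htrans hab hbc, ?_, ?_, ?_⟩
    · obtain ⟨G, hG𝓖, -, -⟩ := hdense ∅ Set.finite_empty F0 hF0 (Set.empty_subset _)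
      exact ⟨Subtype.val ⁻¹' G, by simpa [Set.mem_setOf_eq, himg G hG𝓖] ⟩
    · intro G' hG'
      exact Set.Finite.of_finite_image (hfin _ (h𝓖𝓕 hG')) (Set.injOn_of_injective Subtype.val_injective)
    · intro F' hF' K' hK'fin hK'
      have hKsub : Subtype.val '' K' ⊆ upp R (Subtype.val '' F') := by
        rintro x ⟨k, hk, rfl⟩
        exact (huppV F' k).mp (hK' hk)
      obtain ⟨G, hG𝓖, hKG, hGF⟩ :=
        hdense (Subtype.val '' K') (hK'fin.image _) (Subtype.val '' F') (h𝓖𝓕 hF') hKsub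
      refine ⟨Subtype.val ⁻¹' G, by simpa [Set.mem_setOf_eq, himg G hG𝓖], ?_, ?_⟩
      · intro k hk
        refine (huppV _ k).mpr ?_
        rw [himg G hG𝓖]
        exact hKG ⟨k, hk, rfl⟩
      · intro g hg
        exact (huppV F' g).mpr (hGF hg)
  · rintro M' ⟨𝓐', h𝓐𝓖, h𝓐fin, h𝓐ne, rfl⟩ F' hF' hMF
    set F : Set U := Subtype.val '' F' with hFdef
    have hF𝓕 : F ∈ 𝓕 := h𝓖𝓕 hF'
    set M : Set U := Subtype.val '' (⋃₀ 𝓐') with hMdef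
    have hMjoin : M ∈ joinSat 𝓕 := by
      refine ⟨(Set.image Subtype.val) '' 𝓐', ?_, h𝓐fin.image _, h𝓐ne.image _, ?_⟩
      · rintro A ⟨A', hA', rfl⟩; exact h𝓖𝓕 (h𝓐𝓖 hA')
      · rw [hMdef, Set.image_sUnion]
    have hMsub : M ⊆ upp R F := by
      rintro x ⟨m, hm, rfl⟩
      exact (huppV F' m).mp (hMF hm)
    obtain ⟨H, hH𝓕, hMH, hHF, hmin⟩ := hsl M hMjoin F hF𝓕 hMsub
    obtain ⟨G, hG𝓖, hHG, hGH⟩ := hdense H (hfin H hH𝓕) H hH𝓕 (self_sub H)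
    have hGHupp : upp R G ⊆ upp R H := upp_mono G H hGH
    have hHGupp : upp R H ⊆ upp R G := upp_mono H G hHG
    refine ⟨Subtype.val ⁻¹' G, by simpa [Set.mem_setOf_eq, himg G hG𝓖], ?_, ?_, ?_⟩
    · intro x hx
      refine (huppV _ x).mpr ?_
      rw [himg G hG𝓖]
      exact hHGupp (hMH ((huppV _ x).mp hx))
    · intro x hx
      have := (huppV _ x).mp hx
      rw [himg G hG𝓖] at this
      exact (huppV F' x).mpr (hHF (hGHupp this))
    · intro G₁' hG₁𝓖' h1 h2
      set G₁ : Set U := Subtype.val '' G₁' with hG₁def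
      have hG₁𝓕 : G₁ ∈ 𝓕 := h𝓖𝓕 hG₁𝓖'
      have ha : upp R M ⊆ upp R G₁ := by
        apply upp_mono
        rintro m ⟨m', hm', rfl⟩
        have : m' ∈ upp (fun a b : V => R a.1 b.1) G₁' :=
          h1 ⟨m', hm', hrefl m'.1⟩
        exact (huppV G₁' m').mp this
      have hb : upp R G₁ ⊆ upp R F := by
        apply upp_mono
        rintro g ⟨g', hg', rfl⟩
        have : g' ∈ upp (fun a b : V => R a.1 b.1) F' :=
          h2 ⟨g', hg', hrefl g'.1⟩
        exact (huppV F' g').mp this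
      have hHG₁ : upp R H ⊆ upp R G₁ := hmin G₁ hG₁𝓕 ha hb
      intro x hx
      have := (huppV _ x).mp hx
      rw [himg G hG𝓖] at this
      exact (huppV G₁' x).mpr (hHG₁ (hGHupp this))
end
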